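/- Let 𝓘 be a maximal nested collection on the vertex set V of a finite tree Γ. A nonempty connected subset S ⊆ V belongs to 𝓘 if and only if I_v ⊆ S for every v ∈ S. -/

import Mathlib

namespace Paper

variable {V : Type*}

/-- The subgraph of `G` induced on `S` is connected (any two vertices of `S` are joined
by a walk inside `S`). -/
def Conn (G : SimpleGraph V) (S : Set V) : Prop := (G.induce S).Preconnected

/-- `C` is a connected component of (the subgraph of `G` induced on) `U`:
a maximal nonempty connected subset of `U`. -/
def IsCompOf (G : SimpleGraph V) (C U : Set V) : Prop :=
  C.Nonempty ∧ C ⊆ U ∧ Conn G C ∧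
    ∀ D : Set V, C ⊆ D → D ⊆ U → Conn G D → D = C

/-- A nested collection on (the vertex set of) `G`: a family of nonempty connected
subsets such that (1) any two members are nested or disjoint, and (2) the connected
components of the union of any pairwise disjoint subfamily are exactly the members of
that subfamily. -/
def Nested (G : SimpleGraph V) (𝓘 : Set (Set V)) : Prop :=
  (∀ S ∈ 𝓘, S.Nonempty ∧ Conn G S) ∧
  (∀ S ∈ 𝓘, ∀ T ∈ 𝓘, S ⊆ T ∨ T ⊆ S ∨ S ∩ T = ∅) ∧
  (∀ 𝓙 ⊆ 𝓘, (𝓙.Pairwise fun A B => A ∩ B = ∅) →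
    ∀ C : Set V, IsCompOf G C (⋃₀ 𝓙) ↔ C ∈ 𝓙)

/-- A maximal nested collection: a nested collection whose union is all of `V` and
which is not properly contained in any other nested collection. -/
def MaxNested (G : SimpleGraph V) (𝓘 : Set (Set V)) : Prop :=
  Nested G 𝓘 ∧ ⋃₀ 𝓘 = Set.univ ∧
    ∀ 𝓙 : Set (Set V), Nested G 𝓙 → 𝓘 ⊆ 𝓙 → 𝓙 = 𝓘

/-- `Iv` assigns to each vertex `v` the smallest element of `𝓘` containing `v`
(denoted `I_v`). -/
def IsLeastContaining (𝓘 : Set (Set V)) (Iv : V → Set V) : Prop :=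
  ∀ v : V, Iv v ∈ 𝓘 ∧ v ∈ Iv v ∧ ∀ J ∈ 𝓘, v ∈ J → Iv v ⊆ J

/-- The vertex set `[x,y]` of the unique path in a tree `G` from `x` to `y`:
the vertices lying on every path from `x` to `y`. -/
def interval (G : SimpleGraph V) (x y : V) : Set V :=
  {u | ∀ p : G.Walk x y, p.IsPath → u ∈ p.support}

/-- `S` is rooted with respect to the nested collection (with least-member function
`Iv`): `S` is nonempty, connected, and, `m` denoting the unique element of `S` with
`S ⊆ I_m`, for all `i, j ∈ S` one has `i ∈ I_j` iff `j ∈ [i, m]`. -/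
def Rooted (G : SimpleGraph V) (Iv : V → Set V) (S : Set V) : Prop :=
  S.Nonempty ∧ Conn G S ∧
    ∃ m ∈ S, S ⊆ Iv m ∧ ∀ i ∈ S, ∀ j ∈ S, (i ∈ Iv j ↔ j ∈ interval G i m)

/-- `S̄ := {v ∈ S : I_v ⊄ S}`. -/
def bar (Iv : V → Set V) (S : Set V) : Set V := {v ∈ S | ¬ Iv v ⊆ S}

/-- `S` is weakly rooted: `S` is nonempty, connected, and either `S̄ = ∅` or `S̄` is a
(nonempty) connected rooted set. -/
def WeaklyRooted (G : SimpleGraph V) (Iv : V → Set V) (S : Set V) : Prop :=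
  S.Nonempty ∧ Conn G S ∧ (bar Iv S = ∅ ∨ Rooted G Iv (bar Iv S))

/-- Two (nonempty connected) subsets `I`, `J` are compatible if `I ⊆ J`, or `J ⊆ I`, or
they are disjoint and no edge of `G` joins a vertex of `I` to a vertex of `J`. -/
def Compatible (G : SimpleGraph V) (I J : Set V) : Prop :=
  I ⊆ J ∨ J ⊆ I ∨ (I ∩ J = ∅ ∧ ∀ a ∈ I, ∀ b ∈ J, ¬ G.Adj a b)

end Paper


namespace Aux

variable {V : Type*} {G : SimpleGraph V}

def Conn' (G : SimpleGraph V) (S : Set V) : Prop := (G.induce S).Preconnected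

lemma reach_induce {S : Set V} : ∀ {a b : V} (p : G.Walk a b),
    (∀ x ∈ p.support, x ∈ S) → ∀ (ha : a ∈ S) (hb : b ∈ S),
    (G.induce S).Reachable ⟨a, ha⟩ ⟨b, hb⟩ := by
  intro a b p
  induction p with
  | nil => intro _ ha hb; exact SimpleGraph.Reachable.refl _
  | @cons a c b h q ih =>
    intro hp ha hb
    have hc : c ∈ S := hp c (by simp [SimpleGraph.Walk.support_cons])
    have h1 : (G.induce S).Adj ⟨a, ha⟩ ⟨c, hc⟩ := h
    exact h1.reachable.trans (ih (fun x hx => hp x (by simp [SimpleGraph.Walk.support_cons, hx])) hc hb)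

lemma conn_of_walks {S : Set V}
    (h : ∀ a ∈ S, ∀ b ∈ S, ∃ p : G.Walk a b, ∀ x ∈ p.support, x ∈ S) :
    Conn' G S := by
  rintro ⟨a, ha⟩ ⟨b, hb⟩
  obtain ⟨p, hp⟩ := h a ha b hb
  exact reach_induce p hp ha hb

lemma walks_of_conn {S : Set V} (h : Conn' G S) :
    ∀ a ∈ S, ∀ b ∈ S, ∃ p : G.Walk a b, ∀ x ∈ p.support, x ∈ S := by
  intro a ha b hb
  obtain ⟨q⟩ := h ⟨a, ha⟩ ⟨b, hb⟩
  refine ⟨q.map (SimpleGraph.Embedding.induce S).toHom, ?_⟩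
  intro x hx
  erw [SimpleGraph.Walk.support_map, List.mem_map] at hx
  obtain ⟨y, _, rfl⟩ := hx
  exact y.2

lemma walk_stay {U T : Set V} : ∀ {a b : V} (p : G.Walk a b),
    (∀ x ∈ p.support, x ∈ U) →
    (∀ x ∈ T, ∀ y ∈ U, y ∉ T → ¬ G.Adj x y) → a ∈ T → b ∈ T := by
  intro a b p
  induction p with
  | nil => intro _ _ ha; exact ha
  | @cons a c b h q ih =>
    intro hp hT ha
    have hc : c ∈ U := hp c (by simp [SimpleGraph.Walk.support_cons])
    by_cases hcT : c ∈ T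
    · exact ih (fun x hx => hp x (by simp [SimpleGraph.Walk.support_cons, hx])) hT hcT
    · exact absurd h (hT a ha c hc hcT)

lemma conn_union {A B : Set V} (hA : Conn' G A) (hB : Conn' G B) {a b : V}
    (haA : a ∈ A) (hbB : b ∈ B) (hab : G.Adj a b) : Conn' G (A ∪ B) := by
  apply conn_of_walks
  have keyA : ∀ u ∈ A, ∃ p : G.Walk u a, ∀ x ∈ p.support, x ∈ A ∪ B := by
    intro u hu
    obtain ⟨p, hp⟩ := walks_of_conn hA u hu a haA
    exact ⟨p, fun x hx => Or.inl (hp x hx)⟩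
  have keyB : ∀ u ∈ B, ∃ p : G.Walk u a, ∀ x ∈ p.support, x ∈ A ∪ B := by
    intro u hu
    obtain ⟨p, hp⟩ := walks_of_conn hB u hu b hbB
    refine ⟨p.append (SimpleGraph.Walk.cons hab.symm SimpleGraph.Walk.nil), ?_⟩
    intro x hx
    rw [SimpleGraph.Walk.support_append, List.mem_append] at hx
    rcases hx with hx | hx
    · exact Or.inr (hp x hx)
    · simp only [SimpleGraph.Walk.support_cons, SimpleGraph.Walk.support_nil,
        List.tail_cons, List.mem_singleton] at hx
      subst hx; exact Or.inl haA
  have key : ∀ u ∈ A ∪ B, ∃ p : G.Walk u a, ∀ x ∈ p.support, x ∈ A ∪ B := by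
    rintro u (hu | hu)
    · exact keyA u hu
    · exact keyB u hu
  intro u hu v hv
  obtain ⟨p, hp⟩ := key u hu
  obtain ⟨q, hq⟩ := key v hv
  refine ⟨p.append q.reverse, ?_⟩
  intro x hx
  rw [SimpleGraph.Walk.support_append, List.mem_append] at hx
  rcases hx with hx | hx
  · exact hp x hx
  · exact hq x (by
      have := List.mem_of_mem_tail hx
      rwa [SimpleGraph.Walk.support_reverse, List.mem_reverse] at this)

end Aux

namespace Aux

variable {V : Type*} {G : SimpleGraph V}

lemma comps {K : Set (Set V)} (h1 : ∀ A ∈ K, A.Nonempty ∧ Paper.Conn G A)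
    (h2 : ∀ A ∈ K, ∀ B ∈ K, A ≠ B → A ∩ B = ∅ ∧ ∀ a ∈ A, ∀ b ∈ B, ¬ G.Adj a b)
    (C : Set V) : Paper.IsCompOf G C (⋃₀ K) ↔ C ∈ K := by
  have noedge : ∀ T ∈ K, ∀ x ∈ T, ∀ y ∈ ⋃₀ K, y ∉ T → ¬ G.Adj x y := by
    intro T hT x hx y hy hyT
    obtain ⟨B, hB, hyB⟩ := hy
    have hne : T ≠ B := fun h => hyT (h ▸ hyB)
    exact (h2 T hT B hB hne).2 x hx y hyB
  constructor
  · rintro ⟨⟨c, hc⟩, hCU, hCconn, hmax⟩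
    obtain ⟨T, hT, hcT⟩ := hCU hc
    have hCT : C ⊆ T := by
      intro x hx
      obtain ⟨p, hp⟩ := Aux.walks_of_conn hCconn c hc x hx
      exact Aux.walk_stay p (fun z hz => hCU (hp z hz)) (noedge T hT) hcT
    have hTC := hmax T hCT (Set.subset_sUnion_of_mem hT) (h1 T hT).2
    rw [← hTC]; exact hT
  · intro hC
    refine ⟨(h1 C hC).1, Set.subset_sUnion_of_mem hC, (h1 C hC).2, ?_⟩
    intro D hCD hDU hD
    refine Set.Subset.antisymm ?_ hCD
    intro x hx
    obtain ⟨c, hc⟩ := (h1 C hC).1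
    obtain ⟨p, hp⟩ := Aux.walks_of_conn hD c (hCD hc) x hx
    exact Aux.walk_stay p (fun z hz => hDU (hp z hz)) (noedge C hC) hc

lemma noedge_of_nested {F : Set (Set V)} (hN : Paper.Nested G F) {A B : Set V}
    (hA : A ∈ F) (hB : B ∈ F) (hd : A ∩ B = ∅) : ∀ a ∈ A, ∀ b ∈ B, ¬ G.Adj a b := by
  intro a ha b hb hab
  have hne : A ≠ B := by
    rintro rfl
    rw [Set.inter_self] at hd
    rw [hd] at ha; exact ha
  have hsub : ({A, B} : Set (Set V)) ⊆ F := by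
    intro X hX
    rcases hX with rfl | hX
    · exact hA
    · rw [Set.mem_singleton_iff] at hX; subst hX; exact hB
  have hpw : ({A, B} : Set (Set V)).Pairwise (fun X Y => X ∩ Y = ∅) := by
    intro X hX Y hY hXY
    simp only [Set.mem_insert_iff, Set.mem_singleton_iff] at hX hY
    rcases hX with rfl | rfl <;> rcases hY with rfl | rfl
    · exact absurd rfl hXY
    · exact hd
    · rw [Set.inter_comm]; exact hd
    · exact absurd rfl hXY
  have hcomp : Paper.IsCompOf G A (⋃₀ {A, B}) :=
    (hN.2.2 {A, B} hsub hpw A).2 (Set.mem_insert _ _)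
  have hconn : Paper.Conn G (A ∪ B) :=
    Aux.conn_union (hN.1 A hA).2 (hN.1 B hB).2 ha hb hab
  have heq : A ∪ B = A := by
    apply hcomp.2.2.2 (A ∪ B) Set.subset_union_left
    · rw [Set.sUnion_pair]
    · exact hconn
  have hbA : b ∈ A := heq ▸ (Or.inr hb : b ∈ A ∪ B)
  have hcon : b ∈ A ∩ B := ⟨hbA, hb⟩
  rw [hd] at hcon; exact hcon

lemma key {F : Set (Set V)} (hN : Paper.Nested G F) {Iv : V → Set V}
    (hIv : Paper.IsLeastContaining F Iv) {S : Set V} (hS1 : S.Nonempty)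
    (hS2 : Paper.Conn G S) (h : ∀ v ∈ S, Iv v ⊆ S) {T : Set V} (hT : T ∈ F) :
    S ⊆ T ∨ T ⊆ S ∨ (S ∩ T = ∅ ∧ ∀ a ∈ S, ∀ b ∈ T, ¬ G.Adj a b) := by
  by_cases hST : S ∩ T = ∅
  · refine Or.inr (Or.inr ⟨hST, ?_⟩)
    intro a ha b hb hab
    obtain ⟨hIa, haIa, hleast⟩ := hIv a
    rcases hN.2.1 (Iv a) hIa T hT with hsub | hsub | hdis
    · have hc : a ∈ S ∩ T := ⟨ha, hsub haIa⟩
      rw [hST] at hc; exact hc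
    · have hc : b ∈ S ∩ T := ⟨h a ha (hsub hb), hb⟩
      rw [hST] at hc; exact hc
    · exact noedge_of_nested hN hIa hT hdis a haIa b hb hab
  · obtain ⟨v, hv⟩ := Set.nonempty_iff_ne_empty.mpr hST
    by_cases hTS : T ⊆ S
    · exact Or.inr (Or.inl hTS)
    · left
      intro w hw
      by_contra hwT
      have noST : ∀ x ∈ T, ∀ y ∈ S, y ∉ T → ¬ G.Adj x y := by
        intro x hx y hy hyT hab
        obtain ⟨hIy, hyIy, hleast⟩ := hIv y
        rcases hN.2.1 (Iv y) hIy T hT with hsub | hsub | hdis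
        · exact hyT (hsub hyIy)
        · exact hTS (hsub.trans (h y hy))
        · exact noedge_of_nested hN hIy hT hdis y hyIy x hx hab.symm
      obtain ⟨p, hp⟩ := Aux.walks_of_conn hS2 v hv.1 w hw
      exact hwT (Aux.walk_stay p hp noST hv.2)

lemma main {F : Set (Set V)} (hF : Paper.MaxNested G F) {Iv : V → Set V}
    (hIv : Paper.IsLeastContaining F Iv) {S : Set V} (hS1 : S.Nonempty)
    (hS2 : Paper.Conn G S) (h : ∀ v ∈ S, Iv v ⊆ S) : S ∈ F := by
  obtain ⟨hN, hU, hmax⟩ := hF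
  have hkey : ∀ T ∈ F, S ⊆ T ∨ T ⊆ S ∨ (S ∩ T = ∅ ∧ ∀ a ∈ S, ∀ b ∈ T, ¬ G.Adj a b) :=
    fun T hT => key hN hIv hS1 hS2 h hT
  set J : Set (Set V) := insert S F with hJdef
  have h1 : ∀ A ∈ J, A.Nonempty ∧ Paper.Conn G A := by
    rintro A (rfl | hA)
    · exact ⟨hS1, hS2⟩
    · exact hN.1 A hA
  have noedges : ∀ A ∈ J, ∀ B ∈ J, A ∩ B = ∅ → ∀ a ∈ A, ∀ b ∈ B, ¬ G.Adj a b := by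
    rintro A (rfl | hA) B (rfl | hB) hd
    · intro a ha
      rw [Set.inter_self] at hd
      rw [hd] at ha; exact ha.elim
    · rcases hkey B hB with hsub | hsub | ⟨_, hne⟩
      · obtain ⟨s, hs⟩ := hS1
        have hc : s ∈ A ∩ B := ⟨hs, hsub hs⟩
        rw [hd] at hc; exact hc.elim
      · obtain ⟨b, hb⟩ := (hN.1 B hB).1
        have hc : b ∈ A ∩ B := ⟨hsub hb, hb⟩
        rw [hd] at hc; exact hc.elim
      · exact hne
    · rcases hkey A hA with hsub | hsub | ⟨hd2, hne⟩
      · obtain ⟨s, hs⟩ := hS1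
        have hc : s ∈ A ∩ B := ⟨hsub hs, hs⟩
        rw [hd] at hc; exact hc.elim
      · obtain ⟨a, ha⟩ := (hN.1 A hA).1
        have hc : a ∈ A ∩ B := ⟨ha, hsub ha⟩
        rw [hd] at hc; exact hc.elim
      · exact fun a ha b hb hab => hne b hb a ha hab.symm
    · exact noedge_of_nested hN hA hB hd
  have hNested : Paper.Nested G J := by
    refine ⟨h1, ?_, ?_⟩
    · rintro A (rfl | hA) B (rfl | hB)
      · exact Or.inl subset_rfl
      · rcases hkey B hB with hs | hs | ⟨hd, _⟩
        · exact Or.inl hs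
        · exact Or.inr (Or.inl hs)
        · exact Or.inr (Or.inr hd)
      · rcases hkey A hA with hs | hs | ⟨hd, _⟩
        · exact Or.inr (Or.inl hs)
        · exact Or.inl hs
        · exact Or.inr (Or.inr (by rw [Set.inter_comm]; exact hd))
      · exact hN.2.1 A hA B hB
    · intro K hK hpw C
      apply comps
      · exact fun A hA => h1 A (hK hA)
      · intro A hA B hB hne
        have hd : A ∩ B = ∅ := hpw hA hB hne
        exact ⟨hd, noedges A (hK hA) B (hK hB) hd⟩
  have hJF : J = F := hmax J hNested (Set.subset_insert _ _)
  rw [← hJF]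
  exact Set.mem_insert _ _

end Aux

/-- Let `𝓘` be a maximal nested collection on the vertex set `V` of a finite tree. A
nonempty connected subset `S ⊆ V` belongs to `𝓘` iff `I_v ⊆ S` for every `v ∈ S`. -/
theorem statement_10 {V : Type*} [Fintype V] (G : SimpleGraph V) (hG : G.IsTree)
    (𝓘 : Set (Set V)) (h𝓘 : Paper.MaxNested G 𝓘)
    (Iv : V → Set V) (hIv : Paper.IsLeastContaining 𝓘 Iv)
    (S : Set V) (hS1 : S.Nonempty) (hS2 : Paper.Conn G S) :
    S ∈ 𝓘 ↔ ∀ v ∈ S, Iv v ⊆ S := by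
  constructor
  · intro hS v hv
    exact (hIv v).2.2 S hS hv
  · intro h
    exact Aux.main h𝓘 hIv hS1 hS2 h
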